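/- Let A ∈ ℝ^{m×n}, b ∈ ℝ^m, λ > 0, and suppose x̂ ∈ ℝⁿ is a solution of the SR-LASSO with Ax̂ ≠ b. Then every solution x̄ of the SR-LASSO satisfies b − Ax̄ = ‖Ax̄ − b‖₂ · (b − Ax̂)/‖Ax̂ − b‖₂; in particular, any two solutions with nonzero residual have the same normalized residual (b − Ax)/‖Ax − b‖₂. -/

import Mathlib

open Matrix Filter Topology
open scoped BigOperators Classical

noncomputable def l2 {k : ℕ} (x : Fin k → ℝ) : ℝ := Real.sqrt (∑ i, (x i) ^ 2)

noncomputable def l1 {k : ℕ} (x : Fin k → ℝ) : ℝ := ∑ i, |x i|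

noncomputable def linf {k : ℕ} (x : Fin k → ℝ) : ℝ := sSup (Set.range fun i => |x i|)

noncomputable def dotp {k : ℕ} (x y : Fin k → ℝ) : ℝ := ∑ i, x i * y i

noncomputable def pinv {m s : ℕ} (M : Matrix (Fin m) (Fin s) ℝ) :
    Matrix (Fin s) (Fin m) ℝ := (Mᵀ * M)⁻¹ * Mᵀ

/-- The SR-LASSO objective f_{A,b,λ}(x) := ‖Ax − b‖₂ + λ‖x‖₁. -/
noncomputable def srObj {m n : ℕ} (A : Matrix (Fin m) (Fin n) ℝ) (b : Fin m → ℝ)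
    (lam : ℝ) (x : Fin n → ℝ) : ℝ := l2 (A.mulVec x - b) + lam * l1 x

/-- x is a solution of the SR-LASSO with data (A, b, λ). -/
def IsSol {m n : ℕ} (A : Matrix (Fin m) (Fin n) ℝ) (b : Fin m → ℝ) (lam : ℝ)
    (x : Fin n → ℝ) : Prop := ∀ w : Fin n → ℝ, srObj A b lam x ≤ srObj A b lam w

/-- y is feasible for the SR-LASSO dual: ‖Aᵀy‖_∞ ≤ λ and ‖y‖₂ ≤ 1. -/
noncomputable def DualFeas {m n : ℕ} (A : Matrix (Fin m) (Fin n) ℝ) (lam : ℝ)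
    (y : Fin m → ℝ) : Prop := linf (Aᵀ.mulVec y) ≤ lam ∧ l2 y ≤ 1

/-- y is a solution of the SR-LASSO dual: it is feasible and maximizes ⟨b, ·⟩
over the feasible set. -/
noncomputable def IsDualSol {m n : ℕ} (A : Matrix (Fin m) (Fin n) ℝ) (b : Fin m → ℝ)
    (lam : ℝ) (y : Fin m → ℝ) : Prop :=
  DualFeas A lam y ∧ ∀ y' : Fin m → ℝ, DualFeas A lam y' → dotp b y' ≤ dotp b y

noncomputable def toE {k : ℕ} (x : Fin k → ℝ) : EuclideanSpace ℝ (Fin k) := WithLp.toLp 2 x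

lemma l2_eq_norm {k : ℕ} (x : Fin k → ℝ) : l2 x = ‖toE x‖ := by
  simp [l2, toE, EuclideanSpace.norm_eq, sq_abs]

lemma l2_smul {k : ℕ} (c : ℝ) (x : Fin k → ℝ) : l2 (c • x) = |c| * l2 x := by
  rw [l2_eq_norm, l2_eq_norm]
  have : toE (c • x) = c • toE x := rfl
  rw [this, norm_smul]
  simp [Real.norm_eq_abs]

lemma l2_add_le {k : ℕ} (x y : Fin k → ℝ) : l2 (x + y) ≤ l2 x + l2 y := by
  rw [l2_eq_norm, l2_eq_norm, l2_eq_norm]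
  have : toE (x + y) = toE x + toE y := rfl
  rw [this]; exact norm_add_le _ _

lemma l1_smul {k : ℕ} (c : ℝ) (x : Fin k → ℝ) : l1 (c • x) = |c| * l1 x := by
  simp [l1, abs_mul, Finset.mul_sum]

lemma l1_add_le {k : ℕ} (x y : Fin k → ℝ) : l1 (x + y) ≤ l1 x + l1 y := by
  simp only [l1, ← Finset.sum_add_distrib]
  exact Finset.sum_le_sum fun i _ => abs_add_le _ _

/-- invariance of the normalized residual: if x̂ solves the
SR-LASSO with Ax̂ ≠ b, then every solution x̄ satisfies
b − Ax̄ = ‖Ax̄ − b‖₂ · (b − Ax̂)/‖Ax̂ − b‖₂. -/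
theorem stmt_7 {m n : ℕ} (A : Matrix (Fin m) (Fin n) ℝ) (b : Fin m → ℝ)
    (lam : ℝ) (hlam : 0 < lam) (xhat : Fin n → ℝ)
    (hsol : IsSol A b lam xhat) (hres : A.mulVec xhat ≠ b) :
    ∀ xbar : Fin n → ℝ, IsSol A b lam xbar →
      b - A.mulVec xbar
        = l2 (A.mulVec xbar - b) •
            ((l2 (A.mulVec xhat - b))⁻¹ • (b - A.mulVec xhat)) := by
  intro xbar hsol'
  set u := A.mulVec xhat - b with hu
  set v := A.mulVec xbar - b with hv
  have hune : u ≠ 0 := sub_ne_zero.mpr hres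
  have htEune : toE u ≠ 0 := by
    intro h; apply hune; simpa [toE] using congrArg WithLp.ofLp h
  have hlu : l2 u ≠ 0 := by
    rw [l2_eq_norm]; exact norm_ne_zero_iff.mpr htEune
  have hlu' : (0:ℝ) < l2 u := by
    rw [l2_eq_norm]; exact norm_pos_iff.mpr htEune
  -- the two objectives are equal
  have hF : srObj A b lam xbar = srObj A b lam xhat :=
    le_antisymm (hsol' xhat) (hsol xbar)
  -- midpoint
  set z := (1/2 : ℝ) • (xhat + xbar) with hz
  have hAz : A.mulVec z - b = (1/2 : ℝ) • (u + v) := by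
    rw [hz, Matrix.mulVec_smul, Matrix.mulVec_add, hu, hv]
    funext i
    simp [Pi.smul_apply, smul_eq_mul]
    ring
  have hl2z : l2 (A.mulVec z - b) ≤ (1/2 : ℝ) * (l2 u + l2 v) := by
    rw [hAz, l2_smul]
    have := l2_add_le u v
    rw [abs_of_pos (by norm_num : (0:ℝ) < 1/2)]
    nlinarith
  have hl1z : l1 z ≤ (1/2 : ℝ) * (l1 xhat + l1 xbar) := by
    rw [hz, l1_smul, abs_of_pos (by norm_num : (0:ℝ) < 1/2)]
    have := l1_add_le xhat xbar
    nlinarith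
  have hge : srObj A b lam xhat ≤ srObj A b lam z := hsol z
  have hkey : l2 u + l2 v ≤ l2 (u + v) := by
    have h1 : srObj A b lam xhat = l2 u + lam * l1 xhat := rfl
    have h2 : srObj A b lam xbar = l2 v + lam * l1 xbar := rfl
    have h3 : srObj A b lam z = l2 (A.mulVec z - b) + lam * l1 z := rfl
    have h4 : lam * l1 z ≤ lam * ((1/2 : ℝ) * (l1 xhat + l1 xbar)) :=
      mul_le_mul_of_nonneg_left hl1z hlam.le
    have h5 : l2 ((1/2 : ℝ) • (u + v)) = (1/2 : ℝ) * l2 (u + v) := by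
      rw [l2_smul, abs_of_pos (by norm_num : (0:ℝ) < 1/2)]
    rw [hAz, h5] at hl2z h3
    nlinarith [hge, hF, h1, h2, h3]
  have heq : ‖toE u + toE v‖ = ‖toE u‖ + ‖toE v‖ := by
    have h6 : toE (u + v) = toE u + toE v := rfl
    have := le_antisymm (l2_add_le u v) hkey
    rw [l2_eq_norm, l2_eq_norm, l2_eq_norm, h6] at this
    exact this
  have hray : SameRay ℝ (toE u) (toE v) := sameRay_iff_norm_add.mpr heq
  obtain ⟨r, hr0, hrv⟩ := hray.exists_nonneg_left htEune
  have hveq : v = r • u := by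
    have : toE v = r • toE u := hrv.symm
    exact congrArg WithLp.ofLp this
  have hlv : l2 v = r * l2 u := by
    rw [hveq, l2_smul, abs_of_nonneg hr0]
  have hbu : b - A.mulVec xhat = -u := by rw [hu]; ring_nf
  have hbv : b - A.mulVec xbar = -v := by rw [hv]; ring_nf
  rw [hbu, hbv, hlv, hveq]
  funext i
  simp only [Pi.smul_apply, Pi.neg_apply, smul_eq_mul]
  field_simp
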